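/- arXiv:1707.02808 — 2 statements merged into one kernel-verified Lean document; each statement's English description precedes it below -/
import Mathlib

section
/- (Exterior smash preserves cofibrations.) Let W₁ ⟶ W₁' be a map of retractive simplicial sets over X₁ and W₂ ⟶ W₂' a map of retractive simplicial sets over X₂, both of whose underlying maps of simplicial sets are monomorphisms. Then the induced map W₁ ⊼ W₂ ⟶ W₁' ⊼ W₂' of retractive simplicial sets over X₁ ⨯ X₂ has underlying map a monomorphism. -/
open CategoryTheory CategoryTheory.Limits Simplicial

universe u

attribute [local simp] pushout.inl_desc pushout.inr_desc pushout.inl_desc_assoc pushout.inr_desc_assoc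

/-- A retractive simplicial set over `X`. -/
structure Retr (X : SSet.{u}) where
  Y : SSet.{u}
  r : Y ⟶ X
  s : X ⟶ Y
  retr : s ≫ r = 𝟙 X

namespace Retr

variable {X X₁ X₂ : SSet.{u}}

/-- The "wedge" `Y₁ ⨯ X₂ ∪_(X₁ ⨯ X₂) X₁ ⨯ Y₂`. -/
noncomputable abbrev wedgeObj (W₁ : Retr X₁) (W₂ : Retr X₂) : SSet.{u} :=
  pushout (prod.map W₁.s (𝟙 X₂)) (prod.map (𝟙 X₁) W₂.s)

/-- The canonical map from the wedge to the product. -/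
noncomputable def wedgeToProd (W₁ : Retr X₁) (W₂ : Retr X₂) :
    wedgeObj W₁ W₂ ⟶ W₁.Y ⨯ W₂.Y :=
  pushout.desc (prod.map (𝟙 W₁.Y) W₂.s) (prod.map W₁.s (𝟙 W₂.Y))
    (by simp [prod.map_map])

/-- The map from the wedge to the base, induced by the retractions. -/
noncomputable def wedgeToBase (W₁ : Retr X₁) (W₂ : Retr X₂) :
    wedgeObj W₁ W₂ ⟶ X₁ ⨯ X₂ :=
  pushout.desc (prod.map W₁.r (𝟙 X₂)) (prod.map (𝟙 X₁) W₂.r)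
    (by simp [prod.map_map, W₁.retr, W₂.retr])

/-- The exterior smash product of retractive simplicial sets. -/
noncomputable def esmash (W₁ : Retr X₁) (W₂ : Retr X₂) : Retr (X₁ ⨯ X₂) where
  Y := pushout (wedgeToBase W₁ W₂) (wedgeToProd W₁ W₂)
  s := pushout.inl _ _
  r := pushout.desc (𝟙 _) (prod.map W₁.r W₂.r) (by
    apply pushout.hom_ext <;>
      simp [wedgeToBase, wedgeToProd, prod.map_map, W₁.retr, W₂.retr])
  retr := by simp

/-- The canonical quotient map `Y₁ ⨯ Y₂ ⟶ Y₁ ⊼ Y₂`. -/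
noncomputable def esmashQuot (W₁ : Retr X₁) (W₂ : Retr X₂) :
    (W₁.Y ⨯ W₂.Y) ⟶ (esmash W₁ W₂).Y :=
  pushout.inr _ _

/-- Pushforward of a retractive simplicial set along a map of base simplicial sets. -/
noncomputable def pushf {X X' : SSet.{u}} (f : X ⟶ X') (W : Retr X) : Retr X' where
  Y := pushout W.s f
  s := pushout.inr _ _
  r := pushout.desc (W.r ≫ f) (𝟙 X') (by
    rw [← Category.assoc, W.retr, Category.id_comp, Category.comp_id])
  retr := by simp

/-- The internal smash product over a base with multiplication `μ`. -/
noncomputable def ismash (μ : X ⨯ X ⟶ X) (W₁ W₂ : Retr X) : Retr X :=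
  pushf μ (esmash W₁ W₂)

/-- The canonical quotient map `Y₁ ⨯ Y₂ ⟶ Y₁ ∧ Y₂`. -/
noncomputable def ismashQuot (μ : X ⨯ X ⟶ X) (W₁ W₂ : Retr X) :
    (W₁.Y ⨯ W₂.Y) ⟶ (ismash μ W₁ W₂).Y :=
  esmashQuot W₁ W₂ ≫ pushout.inl (esmash W₁ W₂).s μ

/-- Morphisms of retractive simplicial sets over a fixed base. -/
structure RHom {X : SSet.{u}} (W W' : Retr X) where
  f : W.Y ⟶ W'.Y
  hs : W.s ≫ f = W'.s
  hr : f ≫ W'.r = W.r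

/-- The identity morphism of a retractive simplicial set. -/
def RHom.id (W : Retr X) : RHom W W := ⟨𝟙 _, by simp, by simp⟩

/-- The map induced on wedges by a pair of morphisms of retractive simplicial sets. -/
noncomputable def wedgeMap {W₁ W₁' : Retr X₁} {W₂ W₂' : Retr X₂}
    (φ₁ : RHom W₁ W₁') (φ₂ : RHom W₂ W₂') : wedgeObj W₁ W₂ ⟶ wedgeObj W₁' W₂' :=
  pushout.map _ _ _ _ (prod.map φ₁.f (𝟙 X₂)) (prod.map (𝟙 X₁) φ₂.f) (𝟙 (X₁ ⨯ X₂))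
    (by simp [prod.map_map, φ₁.hs]) (by simp [prod.map_map, φ₂.hs])

/-- The map induced on exterior smash products by a pair of morphisms
of retractive simplicial sets. -/
noncomputable def esmashMap {W₁ W₁' : Retr X₁} {W₂ W₂' : Retr X₂}
    (φ₁ : RHom W₁ W₁') (φ₂ : RHom W₂ W₂') : RHom (esmash W₁ W₂) (esmash W₁' W₂') where
  f := pushout.map _ _ _ _ (𝟙 (X₁ ⨯ X₂)) (prod.map φ₁.f φ₂.f) (wedgeMap φ₁ φ₂)
    (by
      apply pushout.hom_ext <;>
        simp [wedgeMap, wedgeToBase, prod.map_map, φ₁.hr, φ₂.hr])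
    (by
      apply pushout.hom_ext <;>
        simp [wedgeMap, wedgeToProd, prod.map_map, φ₁.hs, φ₂.hs])
  hs := by simp [esmash]
  hr := by
    apply pushout.hom_ext <;>
      simp [esmash, prod.map_map, φ₁.hr, φ₂.hr]

/-- The map induced on pushforwards by a morphism of retractive simplicial sets. -/
noncomputable def pushfMap {X X' : SSet.{u}} (f : X ⟶ X') {W W' : Retr X}
    (φ : RHom W W') : RHom (pushf f W) (pushf f W') where
  f := pushout.map _ _ _ _ φ.f (𝟙 X') (𝟙 X) (by simp [φ.hs]) (by simp)
  hs := by simp [pushf]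
  hr := by
    apply pushout.hom_ext <;> simp [pushf, φ.hr]
    rw [← Category.assoc, φ.hr]

/-- The map induced on internal smash products by a pair of morphisms. -/
noncomputable def ismashMap (μ : X ⨯ X ⟶ X) {W₁ W₁' W₂ W₂' : Retr X}
    (φ₁ : RHom W₁ W₁') (φ₂ : RHom W₂ W₂') :
    RHom (ismash μ W₁ W₂) (ismash μ W₁' W₂') :=
  pushfMap μ (esmashMap φ₁ φ₂)

/-- The pushout of retractive simplicial sets along a pair of morphisms,
computed on underlying simplicial sets. -/
noncomputable def retrPushout {W₁ W₂ W₀ : Retr X} (u : RHom W₁ W₂) (v : RHom W₁ W₀) :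
    Retr X where
  Y := pushout u.f v.f
  s := W₂.s ≫ pushout.inl _ _
  r := pushout.desc W₂.r W₀.r (by rw [u.hr, v.hr])
  retr := by rw [Category.assoc, pushout.inl_desc, W₂.retr]

/-- The first structure map into the pushout of retractive simplicial sets. -/
noncomputable def pInl {W₁ W₂ W₀ : Retr X} (u : RHom W₁ W₂) (v : RHom W₁ W₀) :
    RHom W₂ (retrPushout u v) where
  f := pushout.inl _ _
  hs := rfl
  hr := by simp [retrPushout]

/-- The second structure map into the pushout of retractive simplicial sets. -/
noncomputable def pInr {W₁ W₂ W₀ : Retr X} (u : RHom W₁ W₂) (v : RHom W₁ W₀) :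
    RHom W₀ (retrPushout u v) where
  f := pushout.inr _ _
  hs := by
    show W₀.s ≫ (pushout.inr u.f v.f : _ ⟶ pushout u.f v.f) = W₂.s ≫ pushout.inl u.f v.f
    rw [← u.hs, ← v.hs, Category.assoc, Category.assoc, pushout.condition]
  hr := by simp [retrPushout]

/-- The sum of retractive simplicial sets over `X`. -/
noncomputable def retrSum (Y₁ Y₂ : Retr X) : Retr X where
  Y := pushout Y₁.s Y₂.s
  s := Y₁.s ≫ pushout.inl _ _
  r := pushout.desc Y₁.r Y₂.r (by rw [Y₁.retr, Y₂.retr])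
  retr := by rw [Category.assoc, pushout.inl_desc, Y₁.retr]

/-- The first sum inclusion. -/
noncomputable def sumInl (Y₁ Y₂ : Retr X) : RHom Y₁ (retrSum Y₁ Y₂) where
  f := pushout.inl _ _
  hs := rfl
  hr := by simp [retrSum]

/-- The second sum inclusion. -/
noncomputable def sumInr (Y₁ Y₂ : Retr X) : RHom Y₂ (retrSum Y₁ Y₂) where
  f := pushout.inr _ _
  hs := pushout.condition.symm
  hr := by simp [retrSum]

end Retr

open Retr


namespace CategoryTheory
section AuxTypeLemmas

section TypeLemmas
variable {A B C P : Type u} {f : A ⟶ B} {g : A ⟶ C} {inl : B ⟶ P} {inr : C ⟶ P}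

/-- Joint surjectivity of pushout inclusions in `Type`. -/
lemma IsPushout.type_cases (H : IsPushout f g inl inr) (p : P) :
    (∃ b, inl b = p) ∨ (∃ c, inr c = p) := by
  obtain ⟨j, y, hy⟩ := Types.jointly_surjective _ H.isColimit p
  have hl : H.cocone.ι.app WalkingSpan.left = inl := rfl
  have hr : H.cocone.ι.app WalkingSpan.right = inr := rfl
  rcases j with _ | _ | _
  · left
    refine ⟨f y, ?_⟩
    have : H.cocone.ι.app WalkingSpan.zero = f ≫ inl := by
      rw [← H.cocone.w WalkingSpan.Hom.fst, hl]; rfl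
    rw [this] at hy
    exact hy
  · exact Or.inl ⟨y, hy⟩
  · exact Or.inr ⟨y, hy⟩

/-- Characterization of `inl`/`inr` equalities in pushouts in `Type` when `f` is injective. -/
lemma IsPushout.inl_eq_inl_iff (H : IsPushout f g inl inr) (hf : Function.Injective f) (b₁ b₂ : B) :
    inl b₁ = inl b₂ ↔ b₁ = b₂ ∨ ∃ a₁ a₂, g a₁ = g a₂ ∧ b₁ = f a₁ ∧ b₂ = f a₂ := by
  have : Mono f := (mono_iff_injective f).2 hf
  let e := IsColimit.coconePointUniqueUpToIso H.isColimit (Types.Pushout.isColimitCocone f g)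
  have he : ∀ b : B, e.hom (inl b) = Types.Pushout.inl f g b := fun b => by
    have := ConcreteCategory.congr_hom (IsColimit.comp_coconePointUniqueUpToIso_hom H.isColimit
      (Types.Pushout.isColimitCocone f g) WalkingSpan.left) b
    exact this
  have einj : Function.Injective e.hom := fun x y h => by
    have := congr_arg e.inv h
    simpa using this
  constructor
  · intro h
    have h2 : Types.Pushout.inl f g b₁ = Types.Pushout.inl f g b₂ := by
      rw [← he, ← he, h]
    have h2' := (Types.Pushout.inl_rel'_inl_iff f g b₁ b₂).1
      ((Types.Pushout.quot_mk_eq_iff f g (Sum.inl b₁) (Sum.inl b₂)).1 h2)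
    rcases h2' with h2 | ⟨a₁, a₂, h3, h4, h5⟩
    · exact Or.inl h2
    · exact Or.inr ⟨a₁, a₂, h3, h4, h5⟩
  · rintro (rfl | ⟨a₁, a₂, hg, rfl, rfl⟩)
    · rfl
    · have c1 : inl (f a₁) = inr (g a₁) := ConcreteCategory.congr_hom H.w a₁
      have c2 : inl (f a₂) = inr (g a₂) := ConcreteCategory.congr_hom H.w a₂
      rw [c1, c2, hg]

lemma IsPushout.inr_eq_inr_iff (H : IsPushout f g inl inr) (hf : Function.Injective f) (c₁ c₂ : C) :
    inr c₁ = inr c₂ ↔ c₁ = c₂ := by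
  have : Mono f := (mono_iff_injective f).2 hf
  let e := IsColimit.coconePointUniqueUpToIso H.isColimit (Types.Pushout.isColimitCocone f g)
  have he : ∀ c : C, e.hom (inr c) = Types.Pushout.inr f g c := fun c => by
    exact ConcreteCategory.congr_hom (IsColimit.comp_coconePointUniqueUpToIso_hom H.isColimit
      (Types.Pushout.isColimitCocone f g) WalkingSpan.right) c
  have einj : Function.Injective e.hom := fun x y h => by
    have := congr_arg e.inv h
    simpa using this
  constructor
  · intro h
    have h2 : Types.Pushout.inr f g c₁ = Types.Pushout.inr f g c₂ := by
      rw [← he, ← he, h]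
    exact (Types.Pushout.inr_rel'_inr_iff f g c₁ c₂).1
      ((Types.Pushout.quot_mk_eq_iff f g (Sum.inr c₁) (Sum.inr c₂)).1 h2)
  · rintro rfl; rfl

lemma IsPushout.inl_eq_inr_iff' (H : IsPushout f g inl inr) (hf : Function.Injective f) (b : B) (c : C) :
    inl b = inr c ↔ ∃ a, f a = b ∧ g a = c := by
  exact Types.pushoutCocone_inl_eq_inr_iff_of_isColimit H.isColimit hf b c

end TypeLemmas

section PullbackLemmas

/-- From a pullback square in `Type`, extract preimages. -/
lemma IsPullback.exists_of_type {A B C D : Type u} {fst : A ⟶ B} {snd : A ⟶ C}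
    {f : B ⟶ D} {g : C ⟶ D} (H : IsPullback fst snd f g) (b : B) (c : C)
    (h : f b = g c) : ∃ a, fst a = b ∧ snd a = c := by
  let a := H.lift (↾fun _ : PUnit.{u+1} => b) (↾fun _ => c) (by ext; exact h) PUnit.unit
  exact ⟨a, ConcreteCategory.congr_hom (H.lift_fst _ _ _) PUnit.unit,
    ConcreteCategory.congr_hom (H.lift_snd _ _ _) PUnit.unit⟩

variable {C : Type*} [Category C]

/-- `f ≫ φ` with `φ` mono gives a pullback square. -/
lemma isPullback_comp_mono {A B B' : C} (f : A ⟶ B) (φ : B ⟶ B') [Mono φ] :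
    IsPullback f (𝟙 A) φ (f ≫ φ) := by
  refine IsPullback.of_isLimit' ⟨by simp⟩ (PullbackCone.IsLimit.mk _ (fun s => s.snd) ?_ ?_ ?_)
  · intro s
    have := s.condition
    rw [← cancel_mono φ]
    simpa using this.symm
  · intro s; simp
  · intro s m h₁ h₂; simpa using h₂

/-- The product of two pullback squares is a pullback square. -/
lemma isPullback_prod [HasBinaryProducts C]
    {A₁ B₁ C₁ D₁ A₂ B₂ C₂ D₂ : C}
    {fst₁ : A₁ ⟶ B₁} {snd₁ : A₁ ⟶ C₁} {f₁ : B₁ ⟶ D₁} {g₁ : C₁ ⟶ D₁}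
    {fst₂ : A₂ ⟶ B₂} {snd₂ : A₂ ⟶ C₂} {f₂ : B₂ ⟶ D₂} {g₂ : C₂ ⟶ D₂}
    (H₁ : IsPullback fst₁ snd₁ f₁ g₁) (H₂ : IsPullback fst₂ snd₂ f₂ g₂) :
    IsPullback (prod.map fst₁ fst₂) (prod.map snd₁ snd₂)
      (prod.map f₁ f₂) (prod.map g₁ g₂) := by
  have w : prod.map fst₁ fst₂ ≫ prod.map f₁ f₂ = prod.map snd₁ snd₂ ≫ prod.map g₁ g₂ := by
    rw [prod.map_map, prod.map_map, H₁.w, H₂.w]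
  refine IsPullback.of_isLimit' ⟨w⟩ (PullbackCone.IsLimit.mk _ (fun s =>
    prod.lift
      (H₁.lift (s.fst ≫ prod.fst) (s.snd ≫ prod.fst) ?_)
      (H₂.lift (s.fst ≫ prod.snd) (s.snd ≫ prod.snd) ?_)) ?_ ?_ ?_)
  · have := s.condition =≫ prod.fst
    simpa using this
  · have := s.condition =≫ prod.snd
    simpa using this
  · intro s
    apply Limits.prod.hom_ext <;>
      simp only [Category.assoc, prod.map_fst, prod.map_snd, prod.lift_fst_assoc,
        prod.lift_snd_assoc, IsPullback.lift_fst, IsPullback.lift_snd]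
  · intro s
    apply Limits.prod.hom_ext <;>
      simp only [Category.assoc, prod.map_fst, prod.map_snd, prod.lift_fst_assoc,
        prod.lift_snd_assoc, IsPullback.lift_fst, IsPullback.lift_snd]
  · intro s m h₁ h₂
    apply Limits.prod.hom_ext
    · simp only [prod.lift_fst]
      apply H₁.hom_ext
      · have := h₁ =≫ prod.fst
        simpa using this
      · have := h₂ =≫ prod.fst
        simpa using this
    · simp only [prod.lift_snd]
      apply H₂.hom_ext
      · have := h₁ =≫ prod.snd
        simpa using this
      · have := h₂ =≫ prod.snd
        simpa using this

end PullbackLemmas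

section TypeLemmas
variable {A B C P : Type u} {f : A ⟶ B} {g : A ⟶ C} {inl : B ⟶ P} {inr : C ⟶ P}





/-- A map out of a pushout in `Type` is injective provided its components are injective
monomorphisms intersecting exactly along the pushout vertex. -/
lemma IsPushout.injective_desc {D : Type u} (H : IsPushout f g inl inr)
    {u : B ⟶ D} {v : C ⟶ D} {w : P ⟶ D}
    (hwl : ∀ b, w (inl b) = u b) (hwr : ∀ c, w (inr c) = v c)
    (hu : Function.Injective u) (hv : Function.Injective v)
    (pb : ∀ b c, u b = v c → ∃ a, f a = b ∧ g a = c) :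
    Function.Injective w := by
  intro p₁ p₂ h
  rcases H.type_cases p₁ with ⟨b₁, rfl⟩ | ⟨c₁, rfl⟩ <;>
    rcases H.type_cases p₂ with ⟨b₂, rfl⟩ | ⟨c₂, rfl⟩
  · rw [hwl, hwl] at h
    rw [hu h]
  · rw [hwl, hwr] at h
    obtain ⟨a, rfl, rfl⟩ := pb _ _ h
    exact ConcreteCategory.congr_hom H.w a
  · rw [hwr, hwl] at h
    obtain ⟨a, rfl, rfl⟩ := pb _ _ h.symm
    exact (ConcreteCategory.congr_hom H.w a).symm
  · rw [hwr, hwr] at h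
    rw [hv h]

/-- Injectivity for a map between pushouts in `Type`. -/
lemma IsPushout.injective_map {A' B' C' P' : Type u} (H : IsPushout f g inl inr)
    {f' : A' ⟶ B'} {g' : A' ⟶ C'} {inl' : B' ⟶ P'} {inr' : C' ⟶ P'}
    (H' : IsPushout f' g' inl' inr')
    {α : A ⟶ A'} {β : B ⟶ B'} {γ : C ⟶ C'} {π : P ⟶ P'}
    (hπl : ∀ b, π (inl b) = inl' (β b)) (hπr : ∀ c, π (inr c) = inr' (γ c))
    (hαg : ∀ a, g' (α a) = γ (g a))
    (hf' : Function.Injective f') (hβ : Function.Injective β) (hγ : Function.Injective γ)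
    (pb : ∀ (a' : A') (b : B), f' a' = β b → ∃ a, f a = b ∧ α a = a') :
    Function.Injective π := by
  have hw : ∀ a : A, inl (f a) = inr (g a) := fun a => ConcreteCategory.congr_hom H.w a
  intro p₁ p₂ h
  rcases H.type_cases p₁ with ⟨b₁, rfl⟩ | ⟨c₁, rfl⟩ <;>
    rcases H.type_cases p₂ with ⟨b₂, rfl⟩ | ⟨c₂, rfl⟩
  · rw [hπl, hπl] at h
    rcases (H'.inl_eq_inl_iff hf' _ _).1 h with h | ⟨a₁', a₂', hg', h₁, h₂⟩
    · rw [hβ h]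
    · obtain ⟨a₁, rfl, rfl⟩ := pb _ _ h₁.symm
      obtain ⟨a₂, rfl, rfl⟩ := pb _ _ h₂.symm
      have : g a₁ = g a₂ := hγ (by rw [← hαg, ← hαg, hg'])
      rw [hw a₁, hw a₂, this]
  · rw [hπl, hπr] at h
    obtain ⟨a', h₁, h₂⟩ := (H'.inl_eq_inr_iff' hf' _ _).1 h
    obtain ⟨a, rfl, rfl⟩ := pb _ _ h₁
    have : g a = c₂ := hγ (by rw [← hαg, h₂])
    rw [hw a, this]
  · rw [hπr, hπl] at h
    obtain ⟨a', h₁, h₂⟩ := (H'.inl_eq_inr_iff' hf' _ _).1 h.symm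
    obtain ⟨a, rfl, rfl⟩ := pb _ _ h₁
    have : g a = c₁ := hγ (by rw [← hαg, h₂])
    rw [hw a, this]
  · rw [hπr, hπr] at h
    rw [hγ ((H'.inr_eq_inr_iff hf' _ _).1 h)]

end TypeLemmas

end AuxTypeLemmas
end CategoryTheory

section SSetGlue

namespace Retr

variable {X X₁ X₂ : SSet.{u}}

instance retr_isSplitMono (W : Retr X) : IsSplitMono W.s :=
  IsSplitMono.mk' ⟨W.r, W.retr⟩

lemma injective_app_of_mono {F G : SSet.{u}} (t : F ⟶ G) [Mono t] (n : SimplexCategoryᵒᵖ) :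
    Function.Injective (t.app n) :=
  (mono_iff_injective _).1 ((NatTrans.mono_iff_mono_app t).1 inferInstance n)

lemma wedgeMap_wedgeToProd {W₁ W₁' : Retr X₁} {W₂ W₂' : Retr X₂}
    (φ₁ : RHom W₁ W₁') (φ₂ : RHom W₂ W₂') :
    wedgeMap φ₁ φ₂ ≫ wedgeToProd W₁' W₂' = wedgeToProd W₁ W₂ ≫ prod.map φ₁.f φ₂.f := by
  apply pushout.hom_ext <;>
    simp [wedgeMap, wedgeToProd, prod.map_map, φ₁.hs, φ₂.hs]

lemma wedgeMap_wedgeToBase {W₁ W₁' : Retr X₁} {W₂ W₂' : Retr X₂}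
    (φ₁ : RHom W₁ W₁') (φ₂ : RHom W₂ W₂') :
    wedgeMap φ₁ φ₂ ≫ wedgeToBase W₁' W₂' = wedgeToBase W₁ W₂ := by
  apply pushout.hom_ext <;>
    simp [wedgeMap, wedgeToBase, prod.map_map, φ₁.hr, φ₂.hr]

lemma isPullback_wedge (W₁ : Retr X₁) (W₂ : Retr X₂) :
    IsPullback (prod.map W₁.s (𝟙 X₂)) (prod.map (𝟙 X₁) W₂.s)
      (prod.map (𝟙 W₁.Y) W₂.s) (prod.map W₁.s (𝟙 W₂.Y)) :=
  isPullback_prod (IsPullback.id_vert W₁.s) (IsPullback.id_horiz W₂.s)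

lemma isPullback_left {W₁ W₁' : Retr X₁} {W₂ W₂' : Retr X₂}
    (φ₁ : RHom W₁ W₁') (φ₂ : RHom W₂ W₂') [Mono φ₂.f] :
    IsPullback (prod.map (𝟙 W₁.Y) W₂.s) (prod.map φ₁.f (𝟙 X₂))
      (prod.map φ₁.f φ₂.f) (prod.map (𝟙 W₁'.Y) W₂'.s) :=
  isPullback_prod (IsPullback.id_horiz φ₁.f)
    (by rw [← φ₂.hs]; exact isPullback_comp_mono W₂.s φ₂.f)

lemma isPullback_right {W₁ W₁' : Retr X₁} {W₂ W₂' : Retr X₂}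
    (φ₁ : RHom W₁ W₁') (φ₂ : RHom W₂ W₂') [Mono φ₁.f] :
    IsPullback (prod.map W₁.s (𝟙 W₂.Y)) (prod.map (𝟙 X₁) φ₂.f)
      (prod.map φ₁.f φ₂.f) (prod.map W₁'.s (𝟙 W₂'.Y)) :=
  isPullback_prod (by rw [← φ₁.hs]; exact isPullback_comp_mono W₁.s φ₁.f)
    (IsPullback.id_horiz φ₂.f)

/-- Level-wise injectivity of the canonical map from the wedge to the product. -/
lemma wedgeToProd_injective (W₁ : Retr X₁) (W₂ : Retr X₂) (n : SimplexCategoryᵒᵖ) :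
    Function.Injective ((wedgeToProd W₁ W₂).app n) := by
  have Hw := (IsPushout.of_hasPushout (prod.map W₁.s (𝟙 X₂))
    (prod.map (𝟙 X₁) W₂.s)).map ((evaluation SimplexCategoryᵒᵖ (Type u)).obj n)
  have e₁ : pushout.inl _ _ ≫ wedgeToProd W₁ W₂ = prod.map (𝟙 W₁.Y) W₂.s :=
    pushout.inl_desc _ _ _
  have e₂ : pushout.inr _ _ ≫ wedgeToProd W₁ W₂ = prod.map W₁.s (𝟙 W₂.Y) :=
    pushout.inr_desc _ _ _
  refine Hw.injective_desc
    (u := (prod.map (𝟙 W₁.Y) W₂.s).app n) (v := (prod.map W₁.s (𝟙 W₂.Y)).app n)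
    (w := (wedgeToProd W₁ W₂).app n)
    (fun b => ConcreteCategory.congr_hom (congr_arg (fun t => NatTrans.app t n) e₁) b)
    (fun c => ConcreteCategory.congr_hom (congr_arg (fun t => NatTrans.app t n) e₂) c)
    (injective_app_of_mono _ n) (injective_app_of_mono _ n) ?_
  intro b c h
  exact ((isPullback_wedge W₁ W₂).map
    ((evaluation SimplexCategoryᵒᵖ (Type u)).obj n)).exists_of_type b c h

end Retr

end SSetGlue

/-- **Exterior smash preserves cofibrations.**  If `φ₁ : W₁ ⟶ W₁'` and `φ₂ : W₂ ⟶ W₂'`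
are maps of retractive simplicial sets over `X₁` resp. `X₂` whose underlying maps of
simplicial sets are monomorphisms, then the induced map `W₁ ⊼ W₂ ⟶ W₁' ⊼ W₂'` has
underlying map a monomorphism. -/
theorem esmash_preserves_mono {X₁ X₂ : SSet} {W₁ W₁' : Retr X₁} {W₂ W₂' : Retr X₂}
    (φ₁ : RHom W₁ W₁') (φ₂ : RHom W₂ W₂') (h₁ : Mono φ₁.f) (h₂ : Mono φ₂.f) :
    Mono (esmashMap φ₁ φ₂).f := by
  haveI := h₁
  haveI := h₂
  rw [NatTrans.mono_iff_mono_app]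
  intro n
  rw [mono_iff_injective]
  have He := ((IsPushout.of_hasPushout (wedgeToBase W₁ W₂) (wedgeToProd W₁ W₂)).map
    ((evaluation SimplexCategoryᵒᵖ (Type _)).obj n)).flip
  have He' := ((IsPushout.of_hasPushout (wedgeToBase W₁' W₂') (wedgeToProd W₁' W₂')).map
    ((evaluation SimplexCategoryᵒᵖ (Type _)).obj n)).flip
  have Hw' := (IsPushout.of_hasPushout (prod.map W₁'.s (𝟙 X₂))
    (prod.map (𝟙 X₁) W₂'.s)).map ((evaluation SimplexCategoryᵒᵖ (Type _)).obj n)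
  have eMl : pushout.inl (wedgeToBase W₁ W₂) (wedgeToProd W₁ W₂) ≫ (esmashMap φ₁ φ₂).f
      = 𝟙 (X₁ ⨯ X₂) ≫ pushout.inl (wedgeToBase W₁' W₂') (wedgeToProd W₁' W₂') := by
    simp [esmashMap, esmash]
  have eMr : pushout.inr (wedgeToBase W₁ W₂) (wedgeToProd W₁ W₂) ≫ (esmashMap φ₁ φ₂).f
      = prod.map φ₁.f φ₂.f ≫ pushout.inr (wedgeToBase W₁' W₂') (wedgeToProd W₁' W₂') := by
    simp [esmashMap, esmash]
  have eWl : pushout.inl _ _ ≫ wedgeMap φ₁ φ₂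
      = prod.map φ₁.f (𝟙 X₂) ≫ pushout.inl _ _ := by
    simp [wedgeMap]
  have eWr : pushout.inr _ _ ≫ wedgeMap φ₁ φ₂
      = prod.map (𝟙 X₁) φ₂.f ≫ pushout.inr _ _ := by
    simp [wedgeMap]
  have eD1 : pushout.inl _ _ ≫ wedgeToProd W₁ W₂ = prod.map (𝟙 W₁.Y) W₂.s :=
    pushout.inl_desc _ _ _
  have eD2 : pushout.inr _ _ ≫ wedgeToProd W₁ W₂ = prod.map W₁.s (𝟙 W₂.Y) :=
    pushout.inr_desc _ _ _
  have eD1' : pushout.inl _ _ ≫ wedgeToProd W₁' W₂' = prod.map (𝟙 W₁'.Y) W₂'.s :=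
    pushout.inl_desc _ _ _
  have eD2' : pushout.inr _ _ ≫ wedgeToProd W₁' W₂' = prod.map W₁'.s (𝟙 W₂'.Y) :=
    pushout.inr_desc _ _ _
  refine He.injective_map He'
    (α := (wedgeMap φ₁ φ₂).app n) (β := (prod.map φ₁.f φ₂.f).app n)
    (γ := (𝟙 (X₁ ⨯ X₂) : X₁ ⨯ X₂ ⟶ X₁ ⨯ X₂).app n)
    (π := (esmashMap φ₁ φ₂).f.app n)
    (fun b => ConcreteCategory.congr_hom (congr_arg (fun t => NatTrans.app t n) eMr) b)
    (fun c => ConcreteCategory.congr_hom (congr_arg (fun t => NatTrans.app t n) eMl) c)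
    (fun a => ConcreteCategory.congr_hom (congr_arg (fun t => NatTrans.app t n)
      (wedgeMap_wedgeToBase φ₁ φ₂)) a)
    (wedgeToProd_injective W₁' W₂' n)
    (injective_app_of_mono _ n) (injective_app_of_mono _ n) ?_
  intro a' b h
  rcases Hw'.type_cases a' with ⟨p', rfl⟩ | ⟨q', rfl⟩
  · have hu' : (wedgeToProd W₁' W₂').app n
        ((pushout.inl (prod.map W₁'.s (𝟙 X₂)) (prod.map (𝟙 X₁) W₂'.s)).app n p')
        = (prod.map (𝟙 W₁'.Y) W₂'.s).app n p' :=
      ConcreteCategory.congr_hom (congr_arg (fun t => NatTrans.app t n) eD1') p'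
    obtain ⟨p, hp1, hp2⟩ := ((isPullback_left φ₁ φ₂).map
      ((evaluation SimplexCategoryᵒᵖ (Type _)).obj n)).exists_of_type b p'
      (h.symm.trans hu')
    refine ⟨(pushout.inl (prod.map W₁.s (𝟙 X₂)) (prod.map (𝟙 X₁) W₂.s)).app n p, ?_, ?_⟩
    · exact (ConcreteCategory.congr_hom (congr_arg (fun t => NatTrans.app t n) eD1) p).trans hp1
    · rw [← hp2]
      exact ConcreteCategory.congr_hom (congr_arg (fun t => NatTrans.app t n) eWl) p
  · have hv' : (wedgeToProd W₁' W₂').app n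
        ((pushout.inr (prod.map W₁'.s (𝟙 X₂)) (prod.map (𝟙 X₁) W₂'.s)).app n q')
        = (prod.map W₁'.s (𝟙 W₂'.Y)).app n q' :=
      ConcreteCategory.congr_hom (congr_arg (fun t => NatTrans.app t n) eD2') q'
    obtain ⟨q, hq1, hq2⟩ := ((isPullback_right φ₁ φ₂).map
      ((evaluation SimplexCategoryᵒᵖ (Type _)).obj n)).exists_of_type b q'
      (h.symm.trans hv')
    refine ⟨(pushout.inr (prod.map W₁.s (𝟙 X₂)) (prod.map (𝟙 X₁) W₂.s)).app n q, ?_, ?_⟩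
    · exact (ConcreteCategory.congr_hom (congr_arg (fun t => NatTrans.app t n) eD2) q).trans hq1
    · rw [← hq2]
      exact ConcreteCategory.congr_hom (congr_arg (fun t => NatTrans.app t n) eWr) q
end

section
/- (Homotopy uniqueness of induced maps over the injection category.) Let F be the category whose objects are the finite subsets of ℕ and whose morphisms are the injective functions between them. Let T be a functor from F to topological spaces such that for every morphism i of F the continuous map T(i) is a homotopy equivalence. Then for every pair of morphisms i, j : x ⟶ y in F, the continuous maps T(i) and T(j) are homotopic. -/
open CategoryTheory

/-- The category of finite subsets of `ℕ`, with morphisms the injective functions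
between them. -/
structure FinInj where
  s : Finset ℕ

instance : Category FinInj where
  Hom a b := { f : {x // x ∈ a.s} → {x // x ∈ b.s} // Function.Injective f }
  id _ := ⟨id, fun _ _ h => h⟩
  comp f g := ⟨g.1 ∘ f.1, g.2.comp f.2⟩
  id_comp _ := Subtype.ext rfl
  comp_id _ := Subtype.ext rfl
  assoc _ _ _ := Subtype.ext rfl

/-- A morphism of topological spaces is a homotopy equivalence if it admits a homotopy
inverse. -/
def IsHtpyEquiv {A B : TopCat} (f : A ⟶ B) : Prop :=
  ∃ g : C(B, A), (g.comp f.hom).Homotopic (ContinuousMap.id A) ∧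
    ((f.hom : C(A, B)).comp g).Homotopic (ContinuousMap.id B)

/-- **Homotopy uniqueness of induced maps over the injection category.**  If
`T : FinInj ⥤ TopCat` sends every morphism to a homotopy equivalence, then for every pair
of morphisms `i, j : x ⟶ y` in `FinInj` the maps `T.map i` and `T.map j` are
homotopic. -/
theorem homotopy_uniqueness_over_injection_category (T : FinInj ⥤ TopCat)
    (hT : ∀ {x y : FinInj} (i : x ⟶ y), IsHtpyEquiv (T.map i)) :
    ∀ {x y : FinInj} (i j : x ⟶ y),
      ContinuousMap.Homotopic ((T.map i).hom : C(T.obj x, T.obj y)) (T.map j).hom := by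
  intro x y i j
  -- the empty set is initial
  set o : FinInj := ⟨∅⟩ with ho
  have ε : o ⟶ x := ⟨fun a => absurd a.2 (Finset.notMem_empty _),
    fun a => absurd a.2 (Finset.notMem_empty _)⟩
  have key : ε ≫ i = ε ≫ j :=
    Subtype.ext (funext fun a => absurd a.2 (Finset.notMem_empty _))
  obtain ⟨g, hg1, hg2⟩ := hT ε
  have hkey : (((T.map i).hom : C(T.obj x, T.obj y)).comp (T.map ε).hom).comp g
      = (((T.map j).hom : C(T.obj x, T.obj y)).comp (T.map ε).hom).comp g := by
    congr 1
    have h1 : ((T.map i).hom : C(T.obj x, T.obj y)).comp (T.map ε).hom = (T.map (ε ≫ i)).hom := by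
      rw [T.map_comp]; rfl
    have h2 : ((T.map j).hom : C(T.obj x, T.obj y)).comp (T.map ε).hom = (T.map (ε ≫ j)).hom := by
      rw [T.map_comp]; rfl
    rw [h1, h2, key]
  have hA : ((T.map i).hom : C(T.obj x, T.obj y)).Homotopic
      ((((T.map i).hom : C(T.obj x, T.obj y)).comp (T.map ε).hom).comp g) := by
    have := ContinuousMap.Homotopic.comp (ContinuousMap.Homotopic.refl ((T.map i).hom : C(T.obj x, T.obj y))) hg2
    simpa [ContinuousMap.comp_assoc] using this.symm
  have hB : ((((T.map j).hom : C(T.obj x, T.obj y)).comp (T.map ε).hom).comp g).Homotopic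
      ((T.map j).hom : C(T.obj x, T.obj y)) := by
    have := ContinuousMap.Homotopic.comp (ContinuousMap.Homotopic.refl ((T.map j).hom : C(T.obj x, T.obj y))) hg2
    simpa [ContinuousMap.comp_assoc] using this
  exact hA.trans (hkey ▸ hB)
end
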